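/- (Expected value of the user-oblivious IPS-PBM estimator under personalized behavior.) Let v : U → [0,1] be a second probability distribution on U (the marginal user distribution P(u) over all queries), and suppose ∑_{u ∈ U} p(d,u)·v(u) > 0 for every d ∈ D. Consider the random variable L̂_PBM = ∑_{d ∈ D} λ(d)·c(d) / (∑_{u' ∈ U} p(d,u')·v(u')), where the user u is drawn from the query-conditional distribution w, the examination indicators e(d) are drawn with P(e(d)=1 | u) = p(d,u) independently across documents given u, and c(d) = e(d)·r(d). Then the expectation of L̂_PBM equals ∑_{d ∈ D} λ(d)·r(d) · (∑_{u ∈ U} p(d,u)·w(u)) / (∑_{u ∈ U} p(d,u)·v(u)). Consequently, the IPS-PBM estimator is biased for the ideal loss ∑_{d} λ(d)·r(d) whenever this weighted sum differs from it, i.e. when the query-conditional weighted propensity ∑_{u} p(d,u)·w(u) differs from the marginal weighted propensity ∑_{u} p(d,u)·v(u) on documents carrying nonzero weight λ(d)·r(d). -/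

import Mathlib

open Finset

lemma sum_pi_bool_prod {D : Type} [Fintype D] [DecidableEq D] (q : D → Bool → ℝ) :
    ∑ e : D → Bool, ∏ d, q d (e d) = ∏ d, (q d false + q d true) := by
  rw [← Fintype.prod_sum q]
  simp [Fintype.sum_bool, add_comm]

/-- Expected value of the user-oblivious IPS-PBM estimator under personalized
behavior. The user `u` is drawn from the query-conditional distribution `w`;
given `u`, the examination indicators `e d` are independent Bernoulli with
parameters `p d u`; clicks `c d = e d * r d` are reweighted by the marginal
propensity `∑ u', p d u' * v u'` computed from the marginal user distribution
`v`. The expectation equals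
`∑ d, lam d * r d * (∑ u, p d u * w u) / (∑ u, p d u * v u)`; consequently the
estimator is biased for the ideal loss `∑ d, lam d * r d` whenever this
weighted sum differs from the ideal loss. -/
theorem ips_pbm_estimator_expectation
    (D U : Type) [Fintype D] [DecidableEq D] [Fintype U]
    (lam : D → ℝ) (r : D → ℝ) (hr : ∀ d, r d = 0 ∨ r d = 1)
    (p : D → U → ℝ) (hp : ∀ d u, 0 ≤ p d u ∧ p d u ≤ 1)
    (w : U → ℝ) (hw0 : ∀ u, 0 ≤ w u) (hw1 : ∑ u, w u = 1)
    (v : U → ℝ) (hv0 : ∀ u, 0 ≤ v u) (hv1 : ∑ u, v u = 1)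
    (hpos : ∀ d, 0 < ∑ u, p d u * v u) :
    (∑ u : U, ∑ e : D → Bool,
        (w u * ∏ d, (if e d then p d u else 1 - p d u)) *
          (∑ d, lam d * ((if e d then (1 : ℝ) else 0) * r d) /
            (∑ u', p d u' * v u')))
      = ∑ d, lam d * r d * (∑ u, p d u * w u) / (∑ u, p d u * v u)
    ∧ ((∑ d, lam d * r d * (∑ u, p d u * w u) / (∑ u, p d u * v u))
          ≠ (∑ d, lam d * r d) →
        (∑ u : U, ∑ e : D → Bool,
          (w u * ∏ d, (if e d then p d u else 1 - p d u)) *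
            (∑ d, lam d * ((if e d then (1 : ℝ) else 0) * r d) /
              (∑ u', p d u' * v u')))
          ≠ ∑ d, lam d * r d) := by
  have main :
      (∑ u : U, ∑ e : D → Bool,
        (w u * ∏ d, (if e d then p d u else 1 - p d u)) *
          (∑ d, lam d * ((if e d then (1 : ℝ) else 0) * r d) /
            (∑ u', p d u' * v u')))
      = ∑ d, lam d * r d * (∑ u, p d u * w u) / (∑ u, p d u * v u) := by
    have step1 : ∀ u : U,
        (∑ e : D → Bool,
          (∏ d, (if e d then p d u else 1 - p d u)) *
            (∑ d, lam d * ((if e d then (1 : ℝ) else 0) * r d) /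
              (∑ u', p d u' * v u')))
        = ∑ d, p d u * (lam d * r d / (∑ u', p d u' * v u')) := by
      intro u
      simp_rw [Finset.mul_sum]
      rw [Finset.sum_comm]
      refine Finset.sum_congr rfl fun d _ => ?_
      set q : D → Bool → ℝ := fun d' b => if b then p d' u else 1 - p d' u with hq
      set Q : D → Bool → ℝ := fun d' b =>
        if d' = d then (if b then p d' u * (lam d * r d / (∑ u', p d u' * v u')) else 0)
        else q d' b with hQ
      have hprod : ∀ e : D → Bool,
          (∏ d', q d' (e d')) *
            (lam d * ((if e d then (1 : ℝ) else 0) * r d) / (∑ u', p d u' * v u'))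
          = ∏ d', Q d' (e d') := by
        intro e
        rw [← Finset.mul_prod_erase univ (fun d' => q d' (e d')) (mem_univ d),
            ← Finset.mul_prod_erase univ (fun d' => Q d' (e d')) (mem_univ d)]
        have h1 : ∏ d' ∈ univ.erase d, Q d' (e d') = ∏ d' ∈ univ.erase d, q d' (e d') := by
          refine Finset.prod_congr rfl fun d' hd' => ?_
          simp [hQ, (Finset.mem_erase.mp hd').1]
        rw [h1]
        have h2 : Q d (e d) = q d (e d) *
            (lam d * ((if e d then (1 : ℝ) else 0) * r d) / (∑ u', p d u' * v u')) := by
          cases he : e d <;> simp [hQ, hq]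
        rw [h2]; ring
      simp only [hq] at hprod
      simp_rw [hprod]
      rw [sum_pi_bool_prod Q]
      rw [← Finset.mul_prod_erase univ (fun d' => Q d' false + Q d' true) (mem_univ d)]
      have h3 : ∏ d' ∈ univ.erase d, (Q d' false + Q d' true) = 1 := by
        refine Finset.prod_eq_one fun d' hd' => ?_
        simp [hQ, hq, (Finset.mem_erase.mp hd').1]
      rw [h3]
      simp [hQ]
    calc (∑ u : U, ∑ e : D → Bool,
        (w u * ∏ d, (if e d then p d u else 1 - p d u)) *
          (∑ d, lam d * ((if e d then (1 : ℝ) else 0) * r d) /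
            (∑ u', p d u' * v u')))
        = ∑ u : U, w u * ∑ d, p d u * (lam d * r d / (∑ u', p d u' * v u')) := by
          refine Finset.sum_congr rfl fun u _ => ?_
          rw [← step1 u, Finset.mul_sum]
          refine Finset.sum_congr rfl fun e _ => by ring
      _ = ∑ d, lam d * r d * (∑ u, p d u * w u) / (∑ u, p d u * v u) := by
          simp_rw [Finset.mul_sum]
          rw [Finset.sum_comm]
          refine Finset.sum_congr rfl fun d _ => ?_
          rw [Finset.sum_div]
          refine Finset.sum_congr rfl fun u _ => ?_
          rw [div_eq_mul_inv]
          ring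
  exact ⟨main, fun h => main ▸ h⟩
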